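/- The trace operator on partial measurable functions distributes over products: for any partial measurable function f : X + Z → Y + Z and measurable space W, the function id_W × tr(f) : W × X → W × Y equals the trace over W × Z of the map dst⁻¹ ∘ (id_W × f) ∘ dst : (W × X) + (W × Z) → (W × Y) + (W × Z), where dst : (W × X) + (W × Z) → W × (X + Z) is the canonical distributivity isomorphism. -/
import Mathlib


/-- A partial function `f : X →. Y` is partial measurable when, for every measurable
set `A ⊆ Y`, the set of points where `f` is defined with value in `A` is measurable. -/
def PartialMeasurable {X Y : Type*} [MeasurableSpace X] [MeasurableSpace Y]
    (f : X →. Y) : Prop :=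
  ∀ A : Set Y, MeasurableSet A → MeasurableSet {x | ∃ y ∈ f x, y ∈ A}

/-- The trace relation of `f : X + Z →. Y + Z`: `TraceRel f x y` holds iff
`f (inl x) = inl y`, or there is a finite sequence `z₀, …, zₙ` in `Z` with
`f (inl x) = inr z₀`, `f (inr zᵢ) = inr zᵢ₊₁` for all `i < n`, and
`f (inr zₙ) = inl y`. -/
def TraceRel {X Y Z : Type*} (f : (X ⊕ Z) →. (Y ⊕ Z)) (x : X) (y : Y) : Prop :=
  Sum.inl y ∈ f (Sum.inl x) ∨
    ∃ (n : ℕ) (z : Fin (n + 1) → Z),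
      Sum.inr (z 0) ∈ f (Sum.inl x) ∧
      (∀ i : Fin n, Sum.inr (z i.succ) ∈ f (Sum.inr (z i.castSucc))) ∧
      Sum.inl y ∈ f (Sum.inr (z (Fin.last n)))

/-- `t` is a trace of `f` when the graph of `t` is exactly the trace relation of `f`. -/
def IsTrace {X Y Z : Type*} (f : (X ⊕ Z) →. (Y ⊕ Z)) (t : X →. Y) : Prop :=
  ∀ x y, y ∈ t x ↔ TraceRel f x y

/-- Inverse of the canonical distributivity map `(W × X) + (W × Z) ≅ W × (X + Z)`. -/
def dstInv {W X Z : Type*} : W × (X ⊕ Z) → (W × X) ⊕ (W × Z) := fun p =>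
  match p.2 with
  | Sum.inl x => Sum.inl (p.1, x)
  | Sum.inr z => Sum.inr (p.1, z)

/-- The map `dst⁻¹ ∘ (id_W × f) ∘ dst : (W × X) + (W × Z) →. (W × Y) + (W × Z)`. -/
def prodTraced {W X Y Z : Type*} (f : (X ⊕ Z) →. (Y ⊕ Z)) :
    ((W × X) ⊕ (W × Z)) →. ((W × Y) ⊕ (W × Z)) := fun s =>
  match s with
  | Sum.inl (w, x) => (f (Sum.inl x)).map fun v => dstInv (w, v)
  | Sum.inr (w, z) => (f (Sum.inr z)).map fun v => dstInv (w, v)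

lemma mem_prodTraced_inl {W X Y Z : Type*} (f : (X ⊕ Z) →. (Y ⊕ Z)) (w : W) (x : X)
    (u : (W × Y) ⊕ (W × Z)) :
    u ∈ prodTraced f (Sum.inl (w, x)) ↔ ∃ v ∈ f (Sum.inl x), dstInv (w, v) = u := by
  simp [prodTraced, Part.mem_map_iff]

lemma mem_prodTraced_inr {W X Y Z : Type*} (f : (X ⊕ Z) →. (Y ⊕ Z)) (w : W) (z : Z)
    (u : (W × Y) ⊕ (W × Z)) :
    u ∈ prodTraced (X := X) f (Sum.inr (w, z)) ↔ ∃ v ∈ f (Sum.inr z), dstInv (w, v) = u := by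
  simp [prodTraced, Part.mem_map_iff]

lemma dstInv_inl {W X Z : Type*} (w : W) (x : X) :
    dstInv (Z := Z) (w, Sum.inl x) = Sum.inl (w, x) := rfl

lemma dstInv_inr {W X Z : Type*} (w : W) (z : Z) :
    dstInv (X := X) (w, Sum.inr z) = Sum.inr (w, z) := rfl

/-- The trace operator distributes over products:
`id_W × tr(f) = tr(dst⁻¹ ∘ (id_W × f) ∘ dst)`. -/
theorem trace_prod_distrib
    {W X Y Z : Type*} [MeasurableSpace W] [MeasurableSpace X]
    [MeasurableSpace Y] [MeasurableSpace Z]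
    (f : (X ⊕ Z) →. (Y ⊕ Z)) (hf : PartialMeasurable f)
    (t : X →. Y) (tF : W × X →. W × Y)
    (ht : IsTrace f t) (htF : IsTrace (prodTraced (W := W) f) tF) :
    ∀ (w : W) (x : X), tF (w, x) = (t x).map fun y => (w, y) := by
  intro w x
  apply Part.ext
  rintro ⟨w', y⟩
  rw [htF (w, x) (w', y), Part.mem_map_iff]
  constructor
  · rintro (h | ⟨n, z, h0, hchain, hlast⟩)
    · rw [mem_prodTraced_inl] at h
      obtain ⟨v, hv, hdst⟩ := h
      cases v with
      | inl y₀ =>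
        rw [dstInv_inl] at hdst
        obtain ⟨h1, h2⟩ := Prod.mk.injEq .. ▸ Sum.inl.inj hdst
        exact ⟨y₀, (ht x y₀).mpr (Or.inl hv), by simp [h1, h2]⟩
      | inr z₀ => rw [dstInv_inr] at hdst; exact absurd hdst (by simp)
    · -- first, all first components equal w
      have hfst : ∀ i : Fin (n + 1), (z i).1 = w := by
        intro i
        induction i using Fin.induction with
        | zero =>
          rw [mem_prodTraced_inl] at h0
          obtain ⟨v, hv, hdst⟩ := h0
          cases v with
          | inl y₀ => rw [dstInv_inl] at hdst; exact absurd hdst (by simp)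
          | inr z₀ =>
            rw [dstInv_inr] at hdst
            have := Sum.inr.inj hdst
            rw [← this]
        | succ i ih =>
          have h := hchain i
          rw [mem_prodTraced_inr] at h
          obtain ⟨v, hv, hdst⟩ := h
          cases v with
          | inl y₀ => rw [dstInv_inl] at hdst; exact absurd hdst (by simp)
          | inr z₀ =>
            rw [dstInv_inr] at hdst
            have := Sum.inr.inj hdst
            rw [← this]; exact ih
      -- extract the Z chain
      have hw' : w' = w := by
        rw [mem_prodTraced_inr] at hlast
        obtain ⟨v, hv, hdst⟩ := hlast
        cases v with
        | inl y₀ =>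
          rw [dstInv_inl] at hdst
          have := (Prod.mk.injEq .. ▸ Sum.inl.inj hdst).1
          rw [← this, hfst]
        | inr z₀ => rw [dstInv_inr] at hdst; exact absurd hdst (by simp)
      refine ⟨y, (ht x y).mpr (Or.inr ⟨n, fun i => (z i).2, ?_, ?_, ?_⟩), by simp [hw']⟩
      · rw [mem_prodTraced_inl] at h0
        obtain ⟨v, hv, hdst⟩ := h0
        cases v with
        | inl y₀ => rw [dstInv_inl] at hdst; exact absurd hdst (by simp)
        | inr z₀ =>
          rw [dstInv_inr] at hdst
          have := Sum.inr.inj hdst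
          simpa only [← this] using hv
      · intro i
        have h := hchain i
        rw [mem_prodTraced_inr] at h
        obtain ⟨v, hv, hdst⟩ := h
        cases v with
        | inl y₀ => rw [dstInv_inl] at hdst; exact absurd hdst (by simp)
        | inr z₀ =>
          rw [dstInv_inr] at hdst
          have := Sum.inr.inj hdst
          simpa only [← this] using hv
      · rw [mem_prodTraced_inr] at hlast
        obtain ⟨v, hv, hdst⟩ := hlast
        cases v with
        | inl y₀ =>
          rw [dstInv_inl] at hdst
          have := (Prod.mk.injEq .. ▸ Sum.inl.inj hdst).2
          simpa only [← this] using hv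
        | inr z₀ => rw [dstInv_inr] at hdst; exact absurd hdst (by simp)
  · rintro ⟨y₀, hy₀, heq⟩
    obtain ⟨hw, hy⟩ := Prod.mk.injEq .. ▸ heq
    subst hw; subst hy
    rcases (ht x y₀).mp hy₀ with h | ⟨n, zc, h0, hchain, hlast⟩
    · exact Or.inl ((mem_prodTraced_inl ..).mpr ⟨Sum.inl y₀, h, rfl⟩)
    · refine Or.inr ⟨n, fun i => (w, zc i), ?_, ?_, ?_⟩
      · exact (mem_prodTraced_inl ..).mpr ⟨Sum.inr (zc 0), h0, rfl⟩
      · intro i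
        exact (mem_prodTraced_inr ..).mpr ⟨Sum.inr (zc i.succ), hchain i, rfl⟩
      · exact (mem_prodTraced_inr ..).mpr ⟨Sum.inl y₀, hlast, rfl⟩
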